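/- Let X be a characteristic subspace of V with respect to f that is not hyperinvariant, and let X_H be the largest hyperinvariant subspace of V contained in X. Then X = ⟨X \ X_H⟩^c, and moreover the characteristic hull of X \ X_H equals its f-invariant span: ⟨X \ X_H⟩^c = ⟨X \ X_H⟩, where ⟨X \ X_H⟩ denotes the subspace spanned by {f^i(x) : x ∈ X \ X_H, i ≥ 0}. -/

import Mathlib

open Module LinearMap

section Defs

variable {K V : Type*} [Field K] [AddCommGroup V] [Module K V]

/-- `α` commutes with `f`. -/
def Commutes (f : V →ₗ[K] V) (α : V ≃ₗ[K] V) : Prop :=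
  ∀ v, α (f v) = f (α v)

/-- `X` is hyperinvariant: invariant under every endomorphism commuting with `f`. -/
def Hyperinv (f : V →ₗ[K] V) (X : Submodule K V) : Prop :=
  ∀ g : V →ₗ[K] V, (∀ v, g (f v) = f (g v)) → ∀ x ∈ X, g x ∈ X

/-- `X` is characteristic: `f`-invariant and invariant under every automorphism
commuting with `f`. -/
def Charinv (f : V →ₗ[K] V) (X : Submodule K V) : Prop :=
  (∀ x ∈ X, f x ∈ X) ∧ ∀ α : V ≃ₗ[K] V, Commutes f α → ∀ x ∈ X, α x ∈ X

/-- The characteristic hull of a set `B`: the subspace spanned by all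
`f^i (α b)`, `b ∈ B`, `α` an automorphism commuting with `f`. -/
def charHull (f : V →ₗ[K] V) (B : Set V) : Submodule K V :=
  Submodule.span K
    {y | ∃ b ∈ B, ∃ i : ℕ, ∃ α : V ≃ₗ[K] V, Commutes f α ∧ y = (f ^ i) (α b)}

/-- The `f`-cyclic subspace generated by `x`. -/
def cyc (f : V →ₗ[K] V) (x : V) : Submodule K V :=
  Submodule.span K (Set.range fun i : ℕ => (f ^ i) x)

/-- The `f`-invariant span of a set `B`. -/
def invSpan (f : V →ₗ[K] V) (B : Set V) : Submodule K V :=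
  Submodule.span K {y | ∃ b ∈ B, ∃ i : ℕ, y = (f ^ i) b}

/-- The exponent of `x`: the least `ℓ` with `f^ℓ x = 0`. -/
noncomputable def expnt (f : V →ₗ[K] V) (x : V) : ℕ :=
  sInf {ℓ : ℕ | (f ^ ℓ) x = 0}

/-- The height of `x`: the largest `q` with `x ∈ f^q V`. -/
noncomputable def hgt (f : V →ₗ[K] V) (x : V) : ℕ :=
  sSup {q : ℕ | x ∈ LinearMap.range (f ^ q)}

/-- `u` is a generator of `V`: `V = ⟨u⟩ ⊕ V₂` for some `f`-invariant `V₂`. -/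
def IsGenerator (f : V →ₗ[K] V) (u : V) : Prop :=
  u ≠ 0 ∧ ∃ V₂ : Submodule K V, (∀ x ∈ V₂, f x ∈ V₂) ∧ IsCompl (cyc f u) V₂

/-- `(u 0, …, u (m-1))` is a generator tuple of `V`:
`V = ⟨u 0⟩ ⊕ ⋯ ⊕ ⟨u (m-1)⟩` with nondecreasing exponents. -/
def IsGenTuple {m : ℕ} (f : V →ₗ[K] V) (u : Fin m → V) : Prop :=
  DirectSum.IsInternal (fun i => cyc f (u i)) ∧ Monotone fun i => expnt f (u i)

/-- The Ulm invariant `d(f,r) = dim ((ker f ⊓ f^{r-1} V) / (ker f ⊓ f^r V))`. -/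
noncomputable def ulm (f : V →ₗ[K] V) (r : ℕ) : ℕ :=
  Module.finrank K
    (↥(LinearMap.ker f ⊓ LinearMap.range (f ^ (r - 1))) ⧸
      Submodule.comap (LinearMap.ker f ⊓ LinearMap.range (f ^ (r - 1))).subtype
        (LinearMap.ker f ⊓ LinearMap.range (f ^ r)))

/-- The largest hyperinvariant subspace contained in `X`
(the sum of all hyperinvariant subspaces contained in `X`). -/
noncomputable def largestHyperinv (f : V →ₗ[K] V) (X : Submodule K V) : Submodule K V :=
  sSup {W : Submodule K V | Hyperinv f W ∧ W ≤ X}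

end Defs

theorem stmt4 {K V : Type*} [Field K] [AddCommGroup V] [Module K V]
    [FiniteDimensional K V] (f : V →ₗ[K] V) (hf : IsNilpotent f)
    (X : Submodule K V) (hX : Charinv f X) (hnh : ¬ Hyperinv f X) :
    X = charHull f ((X : Set V) \ (largestHyperinv f X : Set V)) ∧
      charHull f ((X : Set V) \ (largestHyperinv f X : Set V)) =
        invSpan f ((X : Set V) \ (largestHyperinv f X : Set V)) := by

  classical
  set B := (X : Set V) \ (largestHyperinv f X : Set V) with hB
  have hHle : largestHyperinv f X ≤ X := sSup_le fun W hW => hW.2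
  have hHhyp : Hyperinv f (largestHyperinv f X) := by
    intro g hg x hx
    rw [largestHyperinv, sSup_eq_iSup'] at hx ⊢
    refine Submodule.iSup_induction (motive := fun y => g y ∈
      ⨆ (W : {W : Submodule K V | Hyperinv f W ∧ W ≤ X}), (W : Submodule K V)) _ hx ?_ ?_ ?_
    · rintro ⟨W, hW⟩ y hy
      exact Submodule.mem_iSup_of_mem ⟨W, hW⟩ (hW.1 g hg y hy)
    · simp
    · intro a b ha hb
      rw [map_add]; exact add_mem ha hb
  have hne : largestHyperinv f X ≠ X := fun h => hnh (h ▸ hHhyp)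
  obtain ⟨z, hzX, hzH⟩ : ∃ z, z ∈ X ∧ z ∉ largestHyperinv f X := by
    by_contra h
    push_neg at h
    exact hne (le_antisymm hHle h)
  have hspan : X ≤ Submodule.span K B := by
    intro x hx
    by_cases hxH : x ∈ largestHyperinv f X
    · have hz : z ∈ Submodule.span K B := Submodule.subset_span ⟨hzX, hzH⟩
      have hxz : x + z ∈ Submodule.span K B := by
        apply Submodule.subset_span
        refine ⟨X.add_mem hx hzX, fun h => hzH ?_⟩
        simpa using (largestHyperinv f X).sub_mem h hxH
      simpa using Submodule.sub_mem _ hxz hz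
    · exact Submodule.subset_span ⟨hx, hxH⟩
  have hfX : ∀ i : ℕ, ∀ x ∈ X, (f ^ i) x ∈ X := by
    intro i
    induction i with
    | zero => intro x hx; simpa using hx
    | succ n ih =>
      intro x hx
      rw [pow_succ]
      exact ih _ (hX.1 x hx)
  have hchX : charHull f B ≤ X := by
    refine Submodule.span_le.2 ?_
    rintro y ⟨b, ⟨hbX, -⟩, i, α, hα, rfl⟩
    exact hfX i _ (hX.2 α hα b hbX)
  have hBinv : Submodule.span K B ≤ invSpan f B := by
    refine Submodule.span_mono ?_
    intro b hb
    exact ⟨b, hb, 0, by simp⟩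
  have hinvch : invSpan f B ≤ charHull f B := by
    refine Submodule.span_mono ?_
    rintro y ⟨b, hb, i, rfl⟩
    exact ⟨b, hb, i, LinearEquiv.refl K V, fun v => rfl, rfl⟩
  exact ⟨le_antisymm (hspan.trans (hBinv.trans hinvch)) hchX,
    le_antisymm (hchX.trans (hspan.trans hBinv)) hinvch⟩
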